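/- Let F: 𝒮 → ℝ be a convex function on density operators (i.e., F(Σ pᵢ ρᵢ) ≤ Σ pᵢ F(ρᵢ) for probability weights pᵢ), and suppose for each real vector ξ ∈ ℝ^{2M}, F(ρ_{Γ₀, d−ξ}) ≤ c·[ (1/2)(T₀ + ‖d−ξ‖²) + (1/4)(T₀ + ‖d−ξ‖²)² − (1/4)‖d−ξ‖⁴ ] where T₀ ≥ 0 is a constant. If ξ is distributed with a centered probability density P with covariance satisfying ∫P(ξ)‖ξ‖² dξ = T − T₀ and ∫P(ξ) ξ dξ = 0, then ∫ P(ξ) F(ρ_{Γ₀,d−ξ}) dξ ≤ c[ (1/2)(T + ‖d‖²) + (1/4)(T + ‖d‖²)² − (1/4)((T−T₀) + ‖d‖²)² ]. -/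

import Mathlib

open MeasureTheory

/-- Gaussian-mixture averaging step: if a function `f` (the QFI of the pure
Gaussian state `ρ_{Γ₀, d−ξ}`) satisfies the pointwise bound
`f ξ ≤ c [ (1/2)(T₀ + ‖d−ξ‖²) + (1/4)(T₀ + ‖d−ξ‖²)² − (1/4)‖d−ξ‖⁴ ]`
and `ξ` is distributed with a centered probability density `P` with
`∫ P(ξ)‖ξ‖² dξ = T − T₀`, then
`∫ P(ξ) f(ξ) dξ ≤ c [ (1/2)(T + ‖d‖²) + (1/4)(T + ‖d‖²)²
  − (1/4)((T − T₀) + ‖d‖²)² ]`. -/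
theorem stmt_15 {M : ℕ} (c T₀ T : ℝ) (hc : 0 < c) (hT₀ : 0 ≤ T₀)
    (d : EuclideanSpace ℝ (Fin (2 * M)))
    (P : EuclideanSpace ℝ (Fin (2 * M)) → ℝ)
    (f : EuclideanSpace ℝ (Fin (2 * M)) → ℝ)
    (hPpos : ∀ ξ, 0 ≤ P ξ)
    (hPint : Integrable P)
    (hPnorm : ∫ ξ, P ξ = 1)
    (hPvecint : Integrable (fun ξ => P ξ • ξ))
    (hPmean : (∫ ξ, P ξ • ξ) = 0)
    (hPsqint : Integrable (fun ξ => P ξ * ‖ξ‖ ^ 2))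
    (hPsq : (∫ ξ, P ξ * ‖ξ‖ ^ 2) = T - T₀)
    (hfint : Integrable (fun ξ => P ξ * f ξ))
    (hf : ∀ ξ, f ξ ≤ c * ((1 / 2) * (T₀ + ‖d - ξ‖ ^ 2)
      + (1 / 4) * (T₀ + ‖d - ξ‖ ^ 2) ^ 2 - (1 / 4) * ‖d - ξ‖ ^ 4)) :
    (∫ ξ, P ξ * f ξ) ≤ c * ((1 / 2) * (T + ‖d‖ ^ 2)
      + (1 / 4) * (T + ‖d‖ ^ 2) ^ 2 - (1 / 4) * ((T - T₀) + ‖d‖ ^ 2) ^ 2) := by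
  set α : ℝ := T₀ / 2 + T₀ ^ 2 / 4 with hα
  set β : ℝ := (1 + T₀) / 2 with hβ
  -- integrability of the inner-product term
  have hinner : Integrable (fun ξ => (inner ℝ d ξ : ℝ) * P ξ) := by
    have := (innerSL ℝ d).integrable_comp hPvecint
    refine this.congr ?_
    filter_upwards with ξ
    simp [real_inner_smul_right, mul_comm]
  have hinnerval : (∫ ξ, (inner ℝ d ξ : ℝ) * P ξ) = 0 := by
    have h1 := (innerSL ℝ d).integral_comp_comm hPvecint
    have h2 : (∫ ξ, (innerSL ℝ d) (P ξ • ξ)) = ∫ ξ, (inner ℝ d ξ : ℝ) * P ξ := by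
      congr 1; funext ξ; simp [real_inner_smul_right, mul_comm]
    rw [h2] at h1
    rw [h1, hPmean]; simp
  -- pointwise expansion of ‖d - ξ‖²
  have hexp : ∀ ξ : EuclideanSpace ℝ (Fin (2 * M)),
      P ξ * ‖d - ξ‖ ^ 2 = ‖d‖ ^ 2 * P ξ - 2 * ((inner ℝ d ξ : ℝ) * P ξ)
        + P ξ * ‖ξ‖ ^ 2 := by
    intro ξ
    have := @norm_sub_sq_real (EuclideanSpace ℝ (Fin (2 * M))) _ _ d ξ
    rw [this]; ring
  have hgi : Integrable (fun ξ => P ξ * ‖d - ξ‖ ^ 2) := by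
    refine ((((hPint.const_mul (‖d‖ ^ 2)).sub (hinner.const_mul 2)).add
      hPsqint).congr ?_)
    filter_upwards with ξ
    exact (hexp ξ).symm
  have hgval : (∫ ξ, P ξ * ‖d - ξ‖ ^ 2) = ‖d‖ ^ 2 + (T - T₀) := by
    calc (∫ ξ, P ξ * ‖d - ξ‖ ^ 2)
        = ∫ ξ, (‖d‖ ^ 2 * P ξ - 2 * ((inner ℝ d ξ : ℝ) * P ξ) + P ξ * ‖ξ‖ ^ 2) := by
          congr 1; funext ξ; exact hexp ξ
      _ = (∫ ξ, (‖d‖ ^ 2 * P ξ - 2 * ((inner ℝ d ξ : ℝ) * P ξ)))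
            + ∫ ξ, P ξ * ‖ξ‖ ^ 2 := by
          exact integral_add ((hPint.const_mul (‖d‖ ^ 2)).sub (hinner.const_mul 2))
            hPsqint
      _ = (∫ ξ, ‖d‖ ^ 2 * P ξ) - (∫ ξ, 2 * ((inner ℝ d ξ : ℝ) * P ξ))
            + ∫ ξ, P ξ * ‖ξ‖ ^ 2 := by
          rw [integral_sub (hPint.const_mul (‖d‖ ^ 2)) (hinner.const_mul 2)]
      _ = ‖d‖ ^ 2 + (T - T₀) := by
          rw [integral_const_mul, integral_const_mul, hPnorm, hinnerval, hPsq]; ring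
  -- pointwise bound
  have hpt : ∀ ξ, P ξ * f ξ ≤ c * α * P ξ + c * β * (P ξ * ‖d - ξ‖ ^ 2) := by
    intro ξ
    have h1 : P ξ * f ξ ≤ P ξ * (c * ((1 / 2) * (T₀ + ‖d - ξ‖ ^ 2)
        + (1 / 4) * (T₀ + ‖d - ξ‖ ^ 2) ^ 2 - (1 / 4) * ‖d - ξ‖ ^ 4)) :=
      mul_le_mul_of_nonneg_left (hf ξ) (hPpos ξ)
    have h2 : P ξ * (c * ((1 / 2) * (T₀ + ‖d - ξ‖ ^ 2)
        + (1 / 4) * (T₀ + ‖d - ξ‖ ^ 2) ^ 2 - (1 / 4) * ‖d - ξ‖ ^ 4))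
        = c * α * P ξ + c * β * (P ξ * ‖d - ξ‖ ^ 2) := by
      rw [hα, hβ]; ring
    exact le_of_le_of_eq h1 h2
  have hrhsint : Integrable (fun ξ => c * α * P ξ + c * β * (P ξ * ‖d - ξ‖ ^ 2)) :=
    (hPint.const_mul (c * α)).add (hgi.const_mul (c * β))
  have hle : (∫ ξ, P ξ * f ξ)
      ≤ ∫ ξ, (c * α * P ξ + c * β * (P ξ * ‖d - ξ‖ ^ 2)) :=
    integral_mono hfint hrhsint hpt
  have hval : (∫ ξ, (c * α * P ξ + c * β * (P ξ * ‖d - ξ‖ ^ 2)))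
      = c * α + c * β * (‖d‖ ^ 2 + (T - T₀)) := by
    rw [integral_add (hPint.const_mul (c * α)) (hgi.const_mul (c * β)),
      integral_const_mul, integral_const_mul, hPnorm, hgval]; ring
  rw [hval] at hle
  have : c * α + c * β * (‖d‖ ^ 2 + (T - T₀))
      = c * ((1 / 2) * (T + ‖d‖ ^ 2) + (1 / 4) * (T + ‖d‖ ^ 2) ^ 2
        - (1 / 4) * ((T - T₀) + ‖d‖ ^ 2) ^ 2) := by
    rw [hα, hβ]; ring
  exact le_of_le_of_eq hle this
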